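/- Let A be the 3-dimensional commutative ℂ-algebra with basis e₁, e₂, e₃ and nonzero products e₁e₁ = e₂ and e₁e₂ = e₂e₁ = e₃ (all other products of basis vectors are zero). Then a symmetric bilinear form θ : A × A → ℂ satisfies the CD-cocycle condition if and only if θ(e₂, e₃) = 0 and θ(e₃, e₃) = 0. -/
import Mathlib


/-- The multiplication of the 3-dimensional commutative algebra with
`e₁e₁ = e₂`, `e₁e₂ = e₂e₁ = e₃` (all other products of basis vectors zero),
on the carrier `Fin 3 → ℂ`. -/
def mulA (u v : Fin 3 → ℂ) : Fin 3 → ℂ :=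
  ![0, u 0 * v 0, u 0 * v 1 + u 1 * v 0]

lemma mulA_mulA (x y a : Fin 3 → ℂ) :
    mulA (mulA x y) a = (x 0 * y 0 * a 0) • ![0, 0, 1] := by
  funext i
  fin_cases i <;> simp [mulA] <;> ring

/-- A symmetric bilinear form `θ` on the algebra `e₁e₁ = e₂, e₁e₂ = e₃` satisfies the
CD-cocycle condition iff `θ(e₂,e₃) = 0` and `θ(e₃,e₃) = 0`. -/
theorem stmt12 (θ : (Fin 3 → ℂ) →ₗ[ℂ] (Fin 3 → ℂ) →ₗ[ℂ] ℂ)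
    (hsymm : ∀ u v, θ u v = θ v u) :
    (∀ x y a b : Fin 3 → ℂ,
      θ (mulA (mulA x y) a) b + θ (mulA (mulA x b) a) y + θ x (mulA (mulA y b) a)
        = θ (mulA (mulA x y) b) a + θ (mulA (mulA x a) b) y + θ x (mulA (mulA y a) b)) ↔
    (θ ![0, 1, 0] ![0, 0, 1] = 0 ∧ θ ![0, 0, 1] ![0, 0, 1] = 0) := by
  constructor
  · intro h
    constructor
    · have := h ![1,0,0] ![1,0,0] ![1,0,0] ![0,1,0]
      simp [mulA_mulA, map_smul, smul_eq_mul] at this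
      rw [hsymm]
      exact this
    · have := h ![1,0,0] ![1,0,0] ![1,0,0] ![0,0,1]
      simp [mulA_mulA, map_smul, smul_eq_mul] at this
      exact this
  · rintro ⟨h23, h33⟩ x y a b
    have key : ∀ v : Fin 3 → ℂ, θ ![0,0,1] v = v 0 * θ ![0,0,1] ![1,0,0] := by
      intro v
      have hv : v = v 0 • ![1,0,0] + v 1 • ![0,1,0] + v 2 • ![0,0,1] := by
        funext i; fin_cases i <;> simp
      conv_lhs => rw [hv]
      simp only [map_add, map_smul, smul_eq_mul]
      rw [hsymm ![0,0,1] ![0,1,0], h23, h33]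
      ring
    simp only [mulA_mulA, map_smul, LinearMap.smul_apply, smul_eq_mul]
    rw [key b, key y, key a, hsymm x, key x]
    ring
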